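/- Let K be an algebraically closed field of characteristic zero, let I be an ideal of R = K[x₁,…,xₙ], and let a ≥ 0 be an integer. Then Δ^a(I) = ⟨1⟩ if and only if ord_p(I) ≤ a for every point p ∈ Kⁿ. Consequently, the minimum a with Δ^a(I) = ⟨1⟩ (when it exists) equals the maximum over all points p of ord_p(I), i.e. the maxorder of (I,1) is the maximum of the order function p ↦ ord_p(I). -/

import Mathlib

/-- The maximal ideal `m_p` of polynomials vanishing at the point `p ∈ Kⁿ`. -/
noncomputable def vanishingIdeal {K : Type*} [Field K] {n : ℕ} (p : Fin n → K) :
    Ideal (MvPolynomial (Fin n) K) :=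
  RingHom.ker (MvPolynomial.eval p)

/-- The operator `Δ`: the ideal generated by `I` together with all first order
partial derivatives of elements of `I`. -/
noncomputable def deltaOp {K : Type*} [Field K] {n : ℕ}
    (I : Ideal (MvPolynomial (Fin n) K)) : Ideal (MvPolynomial (Fin n) K) :=
  I ⊔ Ideal.span {g | ∃ f ∈ I, ∃ i : Fin n, g = MvPolynomial.pderiv i f}

open MvPolynomial in
/-- Our `vanishingIdeal` agrees with Mathlib's for a singleton set. -/
lemma vanishingIdeal_eq {K : Type*} [Field K] {n : ℕ} (p : Fin n → K) :
    vanishingIdeal p = MvPolynomial.vanishingIdeal K ({p} : Set (Fin n → K)) := by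
  ext f
  rw [MvPolynomial.mem_vanishingIdeal_singleton_iff, MvPolynomial.aeval_eq_eval]
  exact RingHom.mem_ker

open MvPolynomial in
lemma X_sub_C_mem {K : Type*} [Field K] {n : ℕ} (p : Fin n → K) (i : Fin n) :
    X i - C (p i) ∈ vanishingIdeal p := by
  simp [_root_.vanishingIdeal, RingHom.mem_ker]

open MvPolynomial in
lemma sub_C_eval_mem_span {K : Type*} [Field K] {n : ℕ} (p : Fin n → K)
    (f : MvPolynomial (Fin n) K) :
    f - C (eval p f) ∈ Ideal.span (Set.range fun i => X i - C (p i)) := by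
  induction f using MvPolynomial.induction_on with
  | C a => simp
  | add g h hg hh =>
    have : g + h - C (eval p (g + h)) = (g - C (eval p g)) + (h - C (eval p h)) := by
      rw [map_add]; push_cast [map_add]; ring
    rw [this]; exact Ideal.add_mem _ hg hh
  | mul_X g i hg =>
    have : g * X i - C (eval p (g * X i)) =
        g * (X i - C (p i)) + (g - C (eval p g)) * C (p i) := by
      rw [map_mul, eval_X, map_mul]; ring
    rw [this]
    exact Ideal.add_mem _
      (Ideal.mul_mem_left _ _ (Ideal.subset_span ⟨i, rfl⟩))
      (Ideal.mul_mem_right _ _ hg)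

open MvPolynomial in
lemma vanishingIdeal_eq_span {K : Type*} [Field K] {n : ℕ} (p : Fin n → K) :
    vanishingIdeal p = Ideal.span (Set.range fun i => X i - C (p i)) := by
  apply le_antisymm
  · intro f hf
    have h0 : eval p f = 0 := hf
    have := sub_C_eval_mem_span p f
    rwa [h0, map_zero, sub_zero] at this
  · rw [Ideal.span_le]
    rintro g ⟨i, rfl⟩
    exact X_sub_C_mem p i

open MvPolynomial in
/-- The Euler operator at `p`. -/
noncomputable def eulerOp {K : Type*} [Field K] {n : ℕ} (p : Fin n → K)
    (f : MvPolynomial (Fin n) K) : MvPolynomial (Fin n) K :=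
  ∑ i, (X i - C (p i)) * pderiv i f

open MvPolynomial in
lemma eulerOp_add {K : Type*} [Field K] {n : ℕ} (p : Fin n → K)
    (f g : MvPolynomial (Fin n) K) :
    eulerOp p (f + g) = eulerOp p f + eulerOp p g := by
  simp [eulerOp, map_add, mul_add, Finset.sum_add_distrib]

open MvPolynomial in
lemma eulerOp_mul {K : Type*} [Field K] {n : ℕ} (p : Fin n → K)
    (f g : MvPolynomial (Fin n) K) :
    eulerOp p (f * g) = f * eulerOp p g + g * eulerOp p f := by
  simp only [eulerOp, pderiv_mul, Finset.mul_sum]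
  rw [← Finset.sum_add_distrib]
  congr 1; ext i; ring

open MvPolynomial in
lemma eulerOp_mem {K : Type*} [Field K] {n : ℕ} (p : Fin n → K)
    (f : MvPolynomial (Fin n) K) : eulerOp p f ∈ vanishingIdeal p :=
  Ideal.sum_mem _ fun i _ => Ideal.mul_mem_right _ _ (X_sub_C_mem p i)

open MvPolynomial in
/-- Lemma A: differentiation drops the order by at most one. -/
lemma pderiv_mem_pow {K : Type*} [Field K] {n : ℕ} (p : Fin n → K) :
    ∀ (k : ℕ) (f : MvPolynomial (Fin n) K), f ∈ vanishingIdeal p ^ (k + 1) →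
      ∀ i, pderiv i f ∈ vanishingIdeal p ^ k := by
  intro k
  induction k with
  | zero => intro f _ i; simp
  | succ k ih =>
    intro f hf i
    rw [pow_succ] at hf
    refine Submodule.mul_induction_on hf (fun a ha b hb => ?_) (fun x y hx hy => ?_)
    · rw [pderiv_mul]
      refine Ideal.add_mem _ ?_ ?_
      · have : pderiv i a * b ∈ vanishingIdeal p ^ k * vanishingIdeal p :=
          Ideal.mul_mem_mul (ih a ha i) hb
        rwa [← pow_succ] at this
      · exact Ideal.mul_mem_right _ _ ha
    · rw [map_add]; exact Ideal.add_mem _ hx hy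

open MvPolynomial in
/-- Base case of the Euler identity: for `f ∈ m_p`, `E f - f ∈ m_p^2`. -/
lemma eulerOp_key_zero {K : Type*} [Field K] {n : ℕ} (p : Fin n → K)
    (f : MvPolynomial (Fin n) K) (hf : f ∈ vanishingIdeal p) :
    eulerOp p f - f ∈ vanishingIdeal p ^ 2 := by
  rw [vanishingIdeal_eq_span] at hf
  induction hf using Submodule.span_induction with
  | mem x hx =>
    obtain ⟨i, rfl⟩ := hx
    have : eulerOp p (X i - C (p i)) = X i - C (p i) := by
      simp only [eulerOp, map_sub, pderiv_X, pderiv_C, sub_zero]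
      rw [Finset.sum_eq_single i]
      · simp
      · intro b _ hb
        simp [Pi.single_apply, hb]
      · simp
    simp [this]
  | zero => simp [eulerOp]
  | add x y hx hy ihx ihy =>
    have h : eulerOp p (x + y) - (x + y) = (eulerOp p x - x) + (eulerOp p y - y) := by
      rw [eulerOp_add]; ring
    rw [h]; exact Ideal.add_mem _ ihx ihy
  | smul a x hx ihx =>
    have hxm : x ∈ vanishingIdeal p := by
      rw [vanishingIdeal_eq_span]; exact hx
    have h : eulerOp p (a • x) - a • x = a * (eulerOp p x - x) + x * eulerOp p a := by
      rw [smul_eq_mul, eulerOp_mul]; ring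
    rw [h]
    refine Ideal.add_mem _ (Ideal.mul_mem_left _ _ ihx) ?_
    have : x * eulerOp p a ∈ vanishingIdeal p * vanishingIdeal p :=
      Ideal.mul_mem_mul hxm (eulerOp_mem p a)
    rwa [← sq] at this

open MvPolynomial in
/-- The Euler identity modulo higher powers: for `f ∈ m_p^{k+1}`,
`E f - (k+1) f ∈ m_p^{k+2}`. -/
lemma eulerOp_key {K : Type*} [Field K] {n : ℕ} (p : Fin n → K) :
    ∀ (k : ℕ) (f : MvPolynomial (Fin n) K), f ∈ vanishingIdeal p ^ (k + 1) →
      eulerOp p f - ((k : MvPolynomial (Fin n) K) + 1) * f ∈ vanishingIdeal p ^ (k + 2) := by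
  intro k
  induction k with
  | zero =>
    intro f hf
    rw [pow_one] at hf
    have e : ((0 : ℕ) : MvPolynomial (Fin n) K) + 1 = 1 := by norm_num
    rw [e, one_mul]
    exact eulerOp_key_zero p f hf
  | succ k ih =>
    intro f hf
    rw [pow_succ] at hf
    have hc : ((k + 1 : ℕ) : MvPolynomial (Fin n) K) = (k : MvPolynomial (Fin n) K) + 1 := by
      push_cast; ring
    rw [hc]
    refine Submodule.mul_induction_on hf (fun a ha b hb => ?_) (fun x y hx hy => ?_)
    · have hb2 : eulerOp p b - b ∈ vanishingIdeal p ^ 2 := eulerOp_key_zero p b hb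
      have ha2 : eulerOp p a - ((k : MvPolynomial (Fin n) K) + 1) * a ∈
          vanishingIdeal p ^ (k + 2) := ih a ha
      have key : eulerOp p (a * b) - (((k:ℕ) + 1 : MvPolynomial (Fin n) K) + 1) * (a * b) =
          a * (eulerOp p b - b) +
          b * (eulerOp p a - ((k : MvPolynomial (Fin n) K) + 1) * a) := by
        rw [eulerOp_mul]; push_cast; ring
      rw [key]
      refine Ideal.add_mem _ ?_ ?_
      · have : a * (eulerOp p b - b) ∈
            vanishingIdeal p ^ (k + 1) * vanishingIdeal p ^ 2 := Ideal.mul_mem_mul ha hb2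
        rwa [← pow_add] at this
      · have : b * (eulerOp p a - ((k : MvPolynomial (Fin n) K) + 1) * a) ∈
            vanishingIdeal p * vanishingIdeal p ^ (k + 2) := Ideal.mul_mem_mul hb ha2
        rwa [← pow_succ'] at this
    · have h : eulerOp p (x + y) - (((k:ℕ) + 1 : MvPolynomial (Fin n) K) + 1) * (x + y) =
          (eulerOp p x - (((k:ℕ) + 1 : MvPolynomial (Fin n) K) + 1) * x) +
          (eulerOp p y - (((k:ℕ) + 1 : MvPolynomial (Fin n) K) + 1) * y) := by
        rw [eulerOp_add]; ring
      rw [h]; exact Ideal.add_mem _ hx hy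

open MvPolynomial in
/-- Lemma B: in characteristic zero, if `f` and all its partial derivatives lie in
`m_p^{k+1}`, then `f ∈ m_p^{k+2}`. -/
lemma mem_pow_succ_of_pderiv_mem {K : Type*} [Field K] [CharZero K] {n : ℕ} (p : Fin n → K)
    (k : ℕ) (f : MvPolynomial (Fin n) K) (hf : f ∈ vanishingIdeal p ^ (k + 1))
    (hdf : ∀ i, pderiv i f ∈ vanishingIdeal p ^ (k + 1)) :
    f ∈ vanishingIdeal p ^ (k + 2) := by
  have hE : eulerOp p f ∈ vanishingIdeal p ^ (k + 2) := by
    refine Ideal.sum_mem _ fun i _ => ?_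
    have : (X i - C (p i)) * pderiv i f ∈ vanishingIdeal p * vanishingIdeal p ^ (k + 1) :=
      Ideal.mul_mem_mul (X_sub_C_mem p i) (hdf i)
    rwa [← pow_succ'] at this
  have hkey := eulerOp_key p k f hf
  have hmul : ((k : MvPolynomial (Fin n) K) + 1) * f ∈ vanishingIdeal p ^ (k + 2) := by
    have := Ideal.sub_mem _ hE hkey
    simpa using this
  have hC : ((k : MvPolynomial (Fin n) K) + 1) = C ((k : K) + 1) := by
    rw [map_add, map_one, map_natCast]
  have hne : ((k : K) + 1) ≠ 0 := Nat.cast_add_one_ne_zero k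
  have : f = C ((k : K) + 1)⁻¹ * (((k : MvPolynomial (Fin n) K) + 1) * f) := by
    rw [hC, ← mul_assoc, ← map_mul, inv_mul_cancel₀ hne, map_one, one_mul]
  rw [this]
  exact Ideal.mul_mem_left _ _ hmul

open MvPolynomial in
/-- If `I ≤ m_p^{a+1}` then `Δ^a I ≤ m_p`. -/
lemma iterate_le_of_le_pow {K : Type*} [Field K] {n : ℕ} (p : Fin n → K) :
    ∀ (a : ℕ) (I : Ideal (MvPolynomial (Fin n) K)), I ≤ vanishingIdeal p ^ (a + 1) →
      deltaOp^[a] I ≤ vanishingIdeal p := by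
  intro a
  induction a with
  | zero => intro I hI; simpa using hI
  | succ a ih =>
    intro I hI
    rw [Function.iterate_succ_apply]
    refine ih _ ?_
    rw [deltaOp]
    refine sup_le ?_ ?_
    · exact hI.trans (Ideal.pow_le_pow_right (by omega))
    · rw [Ideal.span_le]
      rintro g ⟨f, hf, i, rfl⟩
      exact pderiv_mem_pow p (a + 1) f (hI hf) i

open MvPolynomial in
/-- If `Δ^a I ≤ m_p` then `I ≤ m_p^{a+1}` (characteristic zero). -/
lemma le_pow_of_iterate_le {K : Type*} [Field K] [CharZero K] {n : ℕ} (p : Fin n → K) :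
    ∀ (a : ℕ) (I : Ideal (MvPolynomial (Fin n) K)), deltaOp^[a] I ≤ vanishingIdeal p →
      I ≤ vanishingIdeal p ^ (a + 1) := by
  intro a
  induction a with
  | zero => intro I hI; simpa using hI
  | succ a ih =>
    intro I hI
    rw [Function.iterate_succ_apply] at hI
    have hΔ : deltaOp I ≤ vanishingIdeal p ^ (a + 1) := ih _ hI
    intro f hf
    refine mem_pow_succ_of_pderiv_mem p a f ?_ ?_
    · exact hΔ (le_sup_left (a := I) (b := Ideal.span _) hf)
    · intro i
      refine hΔ ?_
      refine le_sup_right (a := I) ?_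
      exact Ideal.subset_span ⟨f, hf, i, rfl⟩

lemma vanishingIdeal_ne_top {K : Type*} [Field K] {n : ℕ} (p : Fin n → K) :
    vanishingIdeal p ≠ ⊤ := by
  intro h
  have : (1 : MvPolynomial (Fin n) K) ∈ vanishingIdeal p := h ▸ Submodule.mem_top
  have : (1 : K) = 0 := by simpa [vanishingIdeal, RingHom.mem_ker] using this
  exact one_ne_zero this

/-- Over an algebraically closed field of characteristic zero,
`Δ^a(I) = ⟨1⟩` iff `ord_p(I) ≤ a` (i.e. `I ⊄ m_p^{a+1}`) for every point `p`.
Consequently, the minimal `a` with `Δ^a(I) = ⟨1⟩`, when it exists, equals the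
maximum over all points `p` of `ord_p(I)` (the maxorder of `(I,1)`). -/
theorem stmt_10 {K : Type*} [Field K] [IsAlgClosed K] [CharZero K] {n : ℕ}
    (I : Ideal (MvPolynomial (Fin n) K)) :
    (∀ a : ℕ, deltaOp^[a] I = ⊤ ↔ ∀ p : Fin n → K, ¬ I ≤ vanishingIdeal p ^ (a + 1)) ∧
    (∀ a : ℕ, deltaOp^[a] I = ⊤ →
      sInf {a' : ℕ | deltaOp^[a'] I = ⊤} =
        sSup {m : ℕ | ∃ p : Fin n → K, I ≤ vanishingIdeal p ^ m}) := by
  have part1 : ∀ a : ℕ, deltaOp^[a] I = ⊤ ↔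
      ∀ p : Fin n → K, ¬ I ≤ vanishingIdeal p ^ (a + 1) := by
    intro a
    constructor
    · intro h p hle
      have := iterate_le_of_le_pow p a I hle
      rw [h] at this
      exact vanishingIdeal_ne_top p (top_le_iff.mp this)
    · intro h
      by_contra htop
      obtain ⟨M, hM, hle⟩ := Ideal.exists_le_maximal _ htop
      obtain ⟨q, hq⟩ := (MvPolynomial.isMaximal_iff_eq_vanishingIdeal_singleton (I := M)).mp hM
      rw [hq, ← vanishingIdeal_eq] at hle
      exact h q (le_pow_of_iterate_le q a I hle)
  refine ⟨part1, ?_⟩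
  intro a ha
  set S1 : Set ℕ := {a' : ℕ | deltaOp^[a'] I = ⊤} with hS1
  set S2 : Set ℕ := {m : ℕ | ∃ p : Fin n → K, I ≤ vanishingIdeal p ^ m} with hS2
  have hS1ne : S1.Nonempty := ⟨a, ha⟩
  have hmem : sInf S1 ∈ S1 := Nat.sInf_mem hS1ne
  have hbound : ∀ m ∈ S2, m ≤ sInf S1 := by
    intro m hm
    by_contra hlt
    push_neg at hlt
    obtain ⟨p, hp⟩ := hm
    have hle : I ≤ vanishingIdeal p ^ (sInf S1 + 1) :=
      hp.trans (Ideal.pow_le_pow_right (by omega))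
    exact (part1 (sInf S1)).mp hmem p hle
  have hS2ne : S2.Nonempty := ⟨0, fun _ => 0, by simp⟩
  have hbdd : BddAbove S2 := ⟨sInf S1, fun m hm => hbound m hm⟩
  apply le_antisymm
  · -- sInf S1 ≤ sSup S2 : show sInf S1 ∈ S2
    refine le_csSup hbdd ?_
    rcases Nat.eq_zero_or_pos (sInf S1) with h0 | hpos
    · rw [h0]
      exact ⟨fun _ => 0, by simp⟩
    · obtain ⟨b, hb⟩ : ∃ b, sInf S1 = b + 1 := ⟨sInf S1 - 1, by omega⟩
      have hbnot : b ∉ S1 := Nat.notMem_of_lt_sInf (by omega)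
      have : ¬ ∀ p : Fin n → K, ¬ I ≤ vanishingIdeal p ^ (b + 1) := fun h =>
        hbnot ((part1 b).mpr h)
      push_neg at this
      obtain ⟨p, hp⟩ := this
      exact ⟨p, hb ▸ hp⟩
  · exact csSup_le hS2ne hbound
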